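/- Let G be a zero-one network with reactant matrix A ∈ {0,1}^{s×m}, product matrix B ∈ {0,1}^{s×m}, stoichiometric matrix N = B − A of rank d ≥ 2, in which every nonzero row of N changes sign. Suppose exactly m−1 columns of A are zero (say the first m−1 columns). Then the steady-state ideal ⟨f₁,…,f_s⟩ in ℚ(κ)[x], where fᵢ = Σⱼ N_{ij}κⱼ∏ₖ x_k^{A_{kj}}, equals the unit ideal ⟨1⟩. -/

import Mathlib

/-- The field ℚ(κ₁,…,κₘ) of rational functions in the rate constants. -/
abbrev Kf (m : ℕ) : Type := FractionRing (MvPolynomial (Fin m) ℚ)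

/-- The rate constant κⱼ as an element of ℚ(κ). -/
noncomputable def kappa (m : ℕ) (j : Fin m) : Kf m :=
  algebraMap (MvPolynomial (Fin m) ℚ) (Kf m) (MvPolynomial.X j)

theorem stmt8 (s m : ℕ) (A B : Matrix (Fin s) (Fin m) ℕ)
    (hA01 : ∀ i j, A i j = 0 ∨ A i j = 1) (hB01 : ∀ i j, B i j = 0 ∨ B i j = 1)
    (N : Matrix (Fin s) (Fin m) ℚ)
    (hN : ∀ i j, N i j = (B i j : ℚ) - (A i j : ℚ))
    (hcolN : ∀ j, (fun i => N i j) ≠ 0)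
    (hrank : 2 ≤ N.rank)
    (hsign : ∀ i, (N i ≠ 0) → (∃ j, 0 < N i j) ∧ (∃ j, N i j < 0))
    (hzerocols : (Finset.univ.filter (fun j : Fin m => ∀ k, A k j = 0)).card = m - 1)
    (f : Fin s → MvPolynomial (Fin s) (Kf m))
    (hf : ∀ i, f i = ∑ j, MvPolynomial.C ((N i j : Kf m) * kappa m j) *
        ∏ k, (MvPolynomial.X k) ^ A k j) :
    Ideal.span (Set.range f) = ⊤ := by
  classical
  have hm : 1 ≤ m := by
    have h1 := hrank.trans (N.rank_le_card_width)
    simp only [Fintype.card_fin] at h1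
    omega
  -- there is a unique column j₀ of A which is nonzero
  have hcard : (Finset.univ.filter (fun j : Fin m => ¬ ∀ k, A k j = 0)).card = 1 := by
    have h := Finset.card_filter_add_card_filter_not
      (s := (Finset.univ : Finset (Fin m))) (p := fun j : Fin m => ∀ k, A k j = 0)
    rw [hzerocols, Finset.card_univ, Fintype.card_fin] at h
    omega
  obtain ⟨j₀, hj₀⟩ := Finset.card_eq_one.mp hcard
  have hcolzero : ∀ j, j ≠ j₀ → ∀ k, A k j = 0 := by
    intro j hj k
    by_contra hk
    have hjmem : j ∈ Finset.univ.filter (fun j : Fin m => ¬ ∀ k, A k j = 0) := by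
      simp only [Finset.mem_filter, Finset.mem_univ, true_and]
      intro h; exact hk (h k)
    rw [hj₀, Finset.mem_singleton] at hjmem
    exact hj hjmem
  -- negative entries of N
  have hneg : ∀ i j, N i j < 0 → A i j = 1 ∧ N i j = -1 := by
    intro i j h
    have hv := hN i j
    rcases hA01 i j with hA | hA <;> rcases hB01 i j with hB | hB <;>
      rw [hA, hB] at hv <;> rw [hv] at h ⊢ <;> norm_num at h <;> norm_num <;> exact hA
  have hnegj₀ : ∀ i j, N i j < 0 → j = j₀ := by
    intro i j h
    by_contra hj
    have := hcolzero j hj i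
    have := (hneg i j h).1
    omega
  have hrowj₀ : ∀ i, N i ≠ 0 → N i j₀ = -1 := by
    intro i hi
    obtain ⟨j, hj⟩ := (hsign i hi).2
    have hjj := hnegj₀ i j hj
    subst hjj
    exact (hneg i j hj).2
  -- two nonzero rows differing away from j₀
  have hex : ∃ i₁ i₂, N i₁ ≠ 0 ∧ N i₂ ≠ 0 ∧ ∃ j, j ≠ j₀ ∧ N i₁ j ≠ N i₂ j := by
    by_contra hcon
    push_neg at hcon
    have hN0 : N ≠ 0 := by
      intro h
      rw [h, Matrix.rank_zero] at hrank
      omega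
    obtain ⟨i₀, hi₀⟩ : ∃ i, N i ≠ 0 := by
      by_contra h
      push_neg at h
      exact hN0 (funext fun i => h i)
    have hrows : ∀ i, N i = 0 ∨ N i = N i₀ := by
      intro i
      by_cases hi : N i = 0
      · exact Or.inl hi
      · refine Or.inr (funext fun j => ?_)
        by_cases hj : j = j₀
        · subst hj
          rw [hrowj₀ i hi, hrowj₀ i₀ hi₀]
        · exact hcon i i₀ hi hi₀ j hj
    have hNCV : N = (Matrix.of fun i (_ : Fin 1) => if N i = 0 then (0 : ℚ) else 1) *
        (Matrix.of fun (_ : Fin 1) j => N i₀ j) := by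
      funext i j
      rw [Matrix.mul_apply, Fin.sum_univ_one]
      rcases hrows i with h | h
      · simp [h, congrFun h j]
      · by_cases hi : N i = 0
        · simp [hi, congrFun hi j]
        · simp [hi, congrFun h j]
    have hle : N.rank ≤ 1 := by
      rw [hNCV]
      refine (Matrix.rank_mul_le_left _ _).trans ?_
      simpa using Matrix.rank_le_card_width (Matrix.of fun i (_ : Fin 1) => if N i = 0 then (0 : ℚ) else 1)
    omega
  obtain ⟨i₁, i₂, h1, h2, j₁, hj₁, hne⟩ := hex
  set d : Fin m → ℚ := fun j => N i₁ j - N i₂ j with hd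
  set p : MvPolynomial (Fin m) ℚ := ∑ j, MvPolynomial.C (d j) * MvPolynomial.X j with hp
  have hp0 : p ≠ 0 := by
    intro h
    have h2' := congrArg (MvPolynomial.eval (Pi.single j₁ (1 : ℚ))) h
    rw [hp] at h2'
    simp only [map_sum, MvPolynomial.eval_mul, MvPolynomial.eval_C, MvPolynomial.eval_X,
      map_zero] at h2'
    rw [Finset.sum_eq_single j₁] at h2'
    · simp at h2'
      exact hne (by simpa [hd, sub_eq_zero] using h2')
    · intro b _ hb
      simp [Pi.single_apply, hb]
    · simp
  have hcast : ∀ q : ℚ, (q : Kf m) =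
      algebraMap (MvPolynomial (Fin m) ℚ) (Kf m) (MvPolynomial.C q) := by
    intro q
    exact (eq_ratCast ((algebraMap (MvPolynomial (Fin m) ℚ) (Kf m)).comp
      (MvPolynomial.C : ℚ →+* MvPolynomial (Fin m) ℚ)) q).symm
  set c : Kf m := algebraMap (MvPolynomial (Fin m) ℚ) (Kf m) p with hcdef
  have hc0 : c ≠ 0 := by
    intro h
    refine hp0 (IsFractionRing.injective (MvPolynomial (Fin m) ℚ) (Kf m) ?_)
    rw [map_zero, ← hcdef]
    exact h
  have hc : c = ∑ j, (d j : Kf m) * kappa m j := by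
    rw [hcdef, hp, map_sum]
    refine Finset.sum_congr rfl fun j _ => ?_
    rw [map_mul, kappa, hcast]
  have hdj₀ : d j₀ = 0 := by
    simp [hd, hrowj₀ i₁ h1, hrowj₀ i₂ h2]
  have hdiff : f i₁ - f i₂ = MvPolynomial.C c := by
    rw [hf i₁, hf i₂, ← Finset.sum_sub_distrib, hc, map_sum]
    refine Finset.sum_congr rfl fun j _ => ?_
    by_cases hj : j = j₀
    · subst hj
      rw [hrowj₀ i₁ h1, hrowj₀ i₂ h2, hdj₀]
      simp
    · have hP : (∏ k, (MvPolynomial.X k : MvPolynomial (Fin s) (Kf m)) ^ A k j) = 1 :=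
        Finset.prod_eq_one fun k _ => by rw [hcolzero j hj k, pow_zero]
      rw [hP, mul_one, mul_one, ← map_sub]
      congr 1
      push_cast [hd]
      ring
  have hmem : MvPolynomial.C c ∈ Ideal.span (Set.range f) :=
    hdiff ▸ sub_mem (Ideal.subset_span ⟨i₁, rfl⟩) (Ideal.subset_span ⟨i₂, rfl⟩)
  exact Ideal.eq_top_of_isUnit_mem _ hmem
    ((isUnit_iff_ne_zero.mpr hc0).map (MvPolynomial.C : Kf m →+* MvPolynomial (Fin s) (Kf m)))
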